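/- arXiv:2004.10820 — 3 statements merged into one kernel-verified Lean document; each statement's English description precedes it below -/
import Mathlib

section
/- Let J₀, J₁ : ℝⁿ → ℝ be C² with Hessians locally Lipschitz with constant L_H on B_δ(x), set L_λ = ‖∇²J₀(x)‖ + ‖∇²J₁(x)‖, and let Λ(λ, y) be the smallest eigenvalue of ∇²J_λ(y). If 0 < ϱ < 1, x' ∈ B_δ(x), and λ, λ' ∈ [0,1] satisfy L_H‖x - x'‖ + L_λ|λ - λ'| ≤ (1 - ϱ)Λ(λ, x), then Λ(λ', x') ≥ ϱ Λ(λ, x). -/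
open scoped RealInnerProductSpace

/-- Smallest eigenvalue as infimum of the Rayleigh quotient over unit vectors. -/
noncomputable def lmin {n : ℕ}
    (A : EuclideanSpace ℝ (Fin n) →L[ℝ] EuclideanSpace ℝ (Fin n)) : ℝ :=
  ⨅ u : Metric.sphere (0 : EuclideanSpace ℝ (Fin n)) 1,
    ⟪(u : EuclideanSpace ℝ (Fin n)), A u⟫

/-- The Hessian of `J`, as the derivative of its gradient. -/
noncomputable def hess {n : ℕ} (J : EuclideanSpace ℝ (Fin n) → ℝ)
    (x : EuclideanSpace ℝ (Fin n)) :
    EuclideanSpace ℝ (Fin n) →L[ℝ] EuclideanSpace ℝ (Fin n) :=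
  fderiv ℝ (gradient J) x

lemma rayleigh_abs_le {n : ℕ} (A : EuclideanSpace ℝ (Fin n) →L[ℝ] EuclideanSpace ℝ (Fin n))
    (u : Metric.sphere (0 : EuclideanSpace ℝ (Fin n)) 1) :
    |⟪(u : EuclideanSpace ℝ (Fin n)), A u⟫| ≤ ‖A‖ := by
  have hu : ‖(u : EuclideanSpace ℝ (Fin n))‖ = 1 := by
    simpa using mem_sphere_zero_iff_norm.mp u.2
  calc |⟪(u : EuclideanSpace ℝ (Fin n)), A u⟫|
      ≤ ‖(u : EuclideanSpace ℝ (Fin n))‖ * ‖A u‖ := abs_real_inner_le_norm _ _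
    _ ≤ ‖(u : EuclideanSpace ℝ (Fin n))‖ * (‖A‖ * ‖(u : EuclideanSpace ℝ (Fin n))‖) :=
        mul_le_mul_of_nonneg_left (A.le_opNorm _) (norm_nonneg _)
    _ = ‖A‖ := by rw [hu]; ring

lemma lmin_bdd {n : ℕ} (A : EuclideanSpace ℝ (Fin n) →L[ℝ] EuclideanSpace ℝ (Fin n)) :
    BddBelow (Set.range fun u : Metric.sphere (0 : EuclideanSpace ℝ (Fin n)) 1 =>
      ⟪(u : EuclideanSpace ℝ (Fin n)), A u⟫) := by
  refine ⟨-‖A‖, ?_⟩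
  rintro _ ⟨u, rfl⟩
  exact neg_le_of_abs_le (rayleigh_abs_le A u)

lemma lmin_sub_le {n : ℕ} (A B : EuclideanSpace ℝ (Fin n) →L[ℝ] EuclideanSpace ℝ (Fin n)) :
    lmin B - ‖A - B‖ ≤ lmin A := by
  by_cases h : Nonempty (Metric.sphere (0 : EuclideanSpace ℝ (Fin n)) 1)
  · apply le_ciInf
    intro u
    have h1 : lmin B ≤ ⟪(u : EuclideanSpace ℝ (Fin n)), B u⟫ := ciInf_le (lmin_bdd B) u
    have hu : ‖(u : EuclideanSpace ℝ (Fin n))‖ = 1 := by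
      simpa using mem_sphere_zero_iff_norm.mp u.2
    have h2 : |⟪(u : EuclideanSpace ℝ (Fin n)), (B - A) u⟫| ≤ ‖B - A‖ :=
      rayleigh_abs_le (B - A) u
    have h3 : ⟪(u : EuclideanSpace ℝ (Fin n)), (B - A) u⟫
        = ⟪(u : EuclideanSpace ℝ (Fin n)), B u⟫ - ⟪(u : EuclideanSpace ℝ (Fin n)), A u⟫ := by
      rw [ContinuousLinearMap.sub_apply, inner_sub_right]
    rw [norm_sub_rev A B]
    have := abs_le.mp h2
    linarith [this.2, h3 ▸ this.2]
  · rw [not_nonempty_iff] at h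
    have h1 : lmin A = 0 := by
      rw [lmin, iInf_of_isEmpty]; exact Real.sInf_empty
    have h2 : lmin B = 0 := by
      rw [lmin, iInf_of_isEmpty]; exact Real.sInf_empty
    rw [h1, h2]
    linarith [norm_nonneg (A - B)]

theorem stmt_3 {n : ℕ} (J₀ J₁ : EuclideanSpace ℝ (Fin n) → ℝ)
    (hJ₀ : ContDiff ℝ 2 J₀) (hJ₁ : ContDiff ℝ 2 J₁)
    (x : EuclideanSpace ℝ (Fin n)) (δ L_H L_lam ϱ : ℝ)
    (hLip₀ : ∀ y ∈ Metric.ball x δ, ∀ y' ∈ Metric.ball x δ,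
      ‖hess J₀ y - hess J₀ y'‖ ≤ L_H * ‖y - y'‖)
    (hLip₁ : ∀ y ∈ Metric.ball x δ, ∀ y' ∈ Metric.ball x δ,
      ‖hess J₁ y - hess J₁ y'‖ ≤ L_H * ‖y - y'‖)
    (hLlam : L_lam = ‖hess J₀ x‖ + ‖hess J₁ x‖)
    (Λ : ℝ → EuclideanSpace ℝ (Fin n) → ℝ)
    (hΛ : ∀ lam y, Λ lam y = lmin ((1 - lam) • hess J₀ y + lam • hess J₁ y))
    (hϱ0 : 0 < ϱ) (hϱ1 : ϱ < 1)
    (x' : EuclideanSpace ℝ (Fin n)) (hx' : x' ∈ Metric.ball x δ)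
    (lam lam' : ℝ) (hlam : lam ∈ Set.Icc (0:ℝ) 1) (hlam' : lam' ∈ Set.Icc (0:ℝ) 1)
    (hkey : L_H * ‖x - x'‖ + L_lam * |lam - lam'| ≤ (1 - ϱ) * Λ lam x) :
    Λ lam' x' ≥ ϱ * Λ lam x := by
  have hδ : 0 < δ := lt_of_le_of_lt dist_nonneg (Metric.mem_ball.mp hx')
  have hxball : x ∈ Metric.ball x δ := Metric.mem_ball_self hδ
  set H₀ := hess J₀ with hH₀
  set H₁ := hess J₁ with hH₁
  set A : EuclideanSpace ℝ (Fin n) →L[ℝ] EuclideanSpace ℝ (Fin n) :=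
    (1 - lam) • H₀ x + lam • H₁ x with hA
  set A' : EuclideanSpace ℝ (Fin n) →L[ℝ] EuclideanSpace ℝ (Fin n) :=
    (1 - lam') • H₀ x' + lam' • H₁ x' with hA'
  have hdecomp : A' - A = ((1 - lam') • (H₀ x' - H₀ x) + lam' • (H₁ x' - H₁ x))
      + ((lam - lam') • H₀ x + (lam' - lam) • H₁ x) := by
    rw [hA, hA']; module
  have hb0 : ‖H₀ x' - H₀ x‖ ≤ L_H * ‖x' - x‖ := hLip₀ x' hx' x hxball
  have hb1 : ‖H₁ x' - H₁ x‖ ≤ L_H * ‖x' - x‖ := hLip₁ x' hx' x hxball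
  have hLHnn : 0 ≤ L_H * ‖x' - x‖ := le_trans (norm_nonneg _) hb0
  have hc1 : |1 - lam'| = 1 - lam' := abs_of_nonneg (by linarith [hlam'.2])
  have hc2 : |lam'| = lam' := abs_of_nonneg hlam'.1
  have hnorm : ‖A' - A‖ ≤ L_H * ‖x - x'‖ + L_lam * |lam - lam'| := by
    rw [hdecomp]
    calc ‖((1 - lam') • (H₀ x' - H₀ x) + lam' • (H₁ x' - H₁ x))
        + ((lam - lam') • H₀ x + (lam' - lam) • H₁ x)‖
        ≤ (‖(1 - lam') • (H₀ x' - H₀ x)‖ + ‖lam' • (H₁ x' - H₁ x)‖)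
          + (‖(lam - lam') • H₀ x‖ + ‖(lam' - lam) • H₁ x‖) :=
          le_trans (norm_add_le _ _) (by gcongr <;> exact norm_add_le _ _)
      _ = (1 - lam') * ‖H₀ x' - H₀ x‖ + lam' * ‖H₁ x' - H₁ x‖
          + (|lam - lam'| * ‖H₀ x‖ + |lam' - lam| * ‖H₁ x‖) := by
          have e1 := norm_smul (1 - lam') (H₀ x' - H₀ x)
          have e2 := norm_smul lam' (H₁ x' - H₁ x)
          have e3 := norm_smul (lam - lam') (H₀ x)
          have e4 := norm_smul (lam' - lam) (H₁ x)
          simp only [Real.norm_eq_abs] at e1 e2 e3 e4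
          rw [e1, e2, e3, e4, hc1, hc2]
      _ ≤ (1 - lam') * (L_H * ‖x' - x‖) + lam' * (L_H * ‖x' - x‖)
          + (|lam - lam'| * ‖H₀ x‖ + |lam' - lam| * ‖H₁ x‖) := by
          gcongr <;> [linarith [hlam'.2]; exact hlam'.1]
      _ = L_H * ‖x - x'‖ + L_lam * |lam - lam'| := by
          rw [norm_sub_rev x' x, abs_sub_comm lam' lam, hLlam]; ring
  have hmono : Λ lam x - ‖A' - A‖ ≤ Λ lam' x' := by
    rw [hΛ lam x, hΛ lam' x']
    exact lmin_sub_le A' A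
  linarith
end

section
/- Let J₀, J₁ : ℝⁿ → ℝ be C¹ and λ ∈ (0,1). If x ∈ ℝⁿ satisfies ‖(1-λ)∇J₀(x) + λ∇J₁(x)‖ ≤ ε, then x is ε'-Pareto critical with ε' = ε / min{λ, 1-λ}; that is, there is no direction d ∈ ℝⁿ with ∇J₀(x)ᵀd ≤ -ε'‖d‖ and ∇J₁(x)ᵀd < 0, and no direction d with ∇J₁(x)ᵀd ≤ -ε'‖d‖ and ∇J₀(x)ᵀd < 0. -/
open scoped RealInnerProductSpace

lemma aux_stmt9 {n : ℕ} (v w : EuclideanSpace ℝ (Fin n)) (a b ε ε' : ℝ)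
    (ha : 0 < a) (hb : 0 < b) (hε : ‖a • v + b • w‖ ≤ ε) (hε' : ε ≤ a * ε') :
    ¬ ∃ d : EuclideanSpace ℝ (Fin n), ⟪v, d⟫ ≤ -ε' * ‖d‖ ∧ ⟪w, d⟫ < 0 := by
  rintro ⟨d, h1, h2⟩
  have hd : d ≠ 0 := by rintro rfl; simp at h2
  have hdn : (0:ℝ) < ‖d‖ := norm_pos_iff.mpr hd
  have hcs : |⟪a • v + b • w, d⟫| ≤ ‖a • v + b • w‖ * ‖d‖ := abs_real_inner_le_norm _ _
  have hlow : -(ε * ‖d‖) ≤ ⟪a • v + b • w, d⟫ := by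
    have := neg_abs_le ⟪a • v + b • w, d⟫
    nlinarith [norm_nonneg (a • v + b • w)]
  have hexp : ⟪a • v + b • w, d⟫ = a * ⟪v, d⟫ + b * ⟪w, d⟫ := by
    simp [inner_add_left, real_inner_smul_left, Finset.mul_sum, mul_assoc]
  nlinarith

theorem stmt_9 {n : ℕ} (J₀ J₁ : EuclideanSpace ℝ (Fin n) → ℝ)
    (hJ₀ : ContDiff ℝ 1 J₀) (hJ₁ : ContDiff ℝ 1 J₁)
    (lam : ℝ) (hlam : lam ∈ Set.Ioo (0:ℝ) 1)
    (x : EuclideanSpace ℝ (Fin n)) (ε ε' : ℝ)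
    (hcrit : ‖(1 - lam) • gradient J₀ x + lam • gradient J₁ x‖ ≤ ε)
    (hε' : ε' = ε / min lam (1 - lam)) :
    (¬ ∃ d : EuclideanSpace ℝ (Fin n),
        ⟪gradient J₀ x, d⟫ ≤ -ε' * ‖d‖ ∧ ⟪gradient J₁ x, d⟫ < 0) ∧
    (¬ ∃ d : EuclideanSpace ℝ (Fin n),
        ⟪gradient J₁ x, d⟫ ≤ -ε' * ‖d‖ ∧ ⟪gradient J₀ x, d⟫ < 0) := by
  obtain ⟨h0, h1⟩ := hlam
  have hmin : 0 < min lam (1 - lam) := lt_min h0 (by linarith)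
  have hε0 : 0 ≤ ε := le_trans (norm_nonneg _) hcrit
  have key : ∀ c : ℝ, min lam (1 - lam) ≤ c → ε ≤ c * ε' := by
    intro c hc
    rw [hε', mul_div_assoc']
    rw [le_div_iff₀ hmin]
    nlinarith [mul_nonneg hε0 (sub_nonneg.mpr hc)]
  constructor
  · exact aux_stmt9 _ _ _ _ _ _ (by linarith) h0 hcrit (key _ (min_le_right _ _))
  · refine aux_stmt9 (gradient J₁ x) (gradient J₀ x) lam (1 - lam) ε ε' h0
      (by linarith) ?_ (key _ (min_le_left _ _))
    rwa [add_comm]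
end

section
/- Let Q₀, Q₁ be symmetric positive definite n×n matrices and χ₀, χ₁ ∈ ℝⁿ; define x(λ) = [(1-λ)Q₀ + λQ₁]⁻¹((1-λ)Q₀χ₀ + λQ₁χ₁). Then x is differentiable on [0,1] and satisfies the ODE ẋ(λ) = ((1-λ)Q₀ + λQ₁)⁻¹(Q₀(x(λ) − χ₀) − Q₁(x(λ) − χ₁)) with x(0) = χ₀ and x(1) = χ₁. -/
open Matrix

attribute [local instance] Matrix.linftyOpNormedAddCommGroup Matrix.linftyOpNormedRing
  Matrix.linftyOpNormedAlgebra

noncomputable def mulVecL {n : ℕ} : Matrix (Fin n) (Fin n) ℝ →L[ℝ] (Fin n → ℝ) →L[ℝ] (Fin n → ℝ) :=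
  LinearMap.toContinuousLinearMap
  { toFun := fun M => LinearMap.toContinuousLinearMap M.mulVecLin
    map_add' := fun M N => by
      ext v i
      simp [Matrix.add_mulVec]
    map_smul' := fun c M => by
      ext v i
      simp [Matrix.smul_mulVec] }

@[simp] lemma mulVecL_apply {n : ℕ} (M : Matrix (Fin n) (Fin n) ℝ) (v : Fin n → ℝ) :
    mulVecL M v = M *ᵥ v := rfl

lemma posDef_smul {n : ℕ} {c : ℝ} {M : Matrix (Fin n) (Fin n) ℝ} (hc : 0 < c)
    (hM : M.PosDef) : (c • M).PosDef := by
  refine ⟨?_, fun x hx => ?_⟩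
  · have h := hM.1
    rw [Matrix.IsHermitian, Matrix.conjTranspose_smul] at *
    rw [h]
    simp
  · convert smul_pos hc (hM.2 hx) using 1
    rw [smul_eq_mul, Finsupp.mul_sum]
    refine Finsupp.sum_congr fun i _ => ?_
    rw [Finsupp.mul_sum]
    refine Finsupp.sum_congr fun j _ => ?_
    simp only [Matrix.smul_apply, smul_eq_mul, star_trivial]
    ring

theorem stmt_14 {n : ℕ} (Q₀ Q₁ : Matrix (Fin n) (Fin n) ℝ)
    (hQ₀sym : Q₀.IsSymm) (hQ₁sym : Q₁.IsSymm)
    (hQ₀ : Q₀.PosDef) (hQ₁ : Q₁.PosDef)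
    (χ₀ χ₁ : Fin n → ℝ)
    (x : ℝ → (Fin n → ℝ))
    (hx : ∀ lam : ℝ, x lam = ((1 - lam) • Q₀ + lam • Q₁)⁻¹
        *ᵥ ((1 - lam) • (Q₀ *ᵥ χ₀) + lam • (Q₁ *ᵥ χ₁))) :
    (∀ lam ∈ Set.Icc (0:ℝ) 1,
      ∃ d : Fin n → ℝ,
        HasDerivWithinAt x d (Set.Icc (0:ℝ) 1) lam ∧
        d = ((1 - lam) • Q₀ + lam • Q₁)⁻¹
            *ᵥ (Q₀ *ᵥ (x lam - χ₀) - Q₁ *ᵥ (x lam - χ₁))) ∧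
    x 0 = χ₀ ∧ x 1 = χ₁ := by
  set A : ℝ → Matrix (Fin n) (Fin n) ℝ := fun l => (1 - l) • Q₀ + l • Q₁ with hA
  set b : ℝ → (Fin n → ℝ) := fun l => (1 - l) • (Q₀ *ᵥ χ₀) + l • (Q₁ *ᵥ χ₁) with hb
  have hApos : ∀ lam ∈ Set.Icc (0:ℝ) 1, (A lam).PosDef := by
    rintro lam ⟨h0, h1⟩
    rcases eq_or_lt_of_le h0 with h0 | h0
    · simp [hA, ← h0, hQ₀]
    rcases eq_or_lt_of_le h1 with h1 | h1
    · simp [hA, h1, hQ₁]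
    · exact (posDef_smul (by linarith) hQ₀).add (posDef_smul h0 hQ₁)
  refine ⟨fun lam hlam => ?_, ?_, ?_⟩
  · have hu : IsUnit (A lam) := (hApos lam hlam).isUnit
    have hAd : HasDerivAt A (Q₁ - Q₀) lam := by
      have h1 : HasDerivAt (fun l : ℝ => (1 - l) • Q₀) ((-1 : ℝ) • Q₀) lam := by
        exact (((hasDerivAt_id lam).const_sub 1).smul_const Q₀)
      have h2 : HasDerivAt (fun l : ℝ => l • Q₁) ((1 : ℝ) • Q₁) lam :=
        (hasDerivAt_id lam).smul_const Q₁
      refine (h1.add h2).congr_deriv ?_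
      rw [neg_one_smul, one_smul]; abel
    have hbd : HasDerivAt b (Q₁ *ᵥ χ₁ - Q₀ *ᵥ χ₀) lam := by
      have h1 : HasDerivAt (fun l : ℝ => (1 - l) • (Q₀ *ᵥ χ₀)) ((-1 : ℝ) • (Q₀ *ᵥ χ₀)) lam := by
        exact (((hasDerivAt_id lam).const_sub 1).smul_const (Q₀ *ᵥ χ₀))
      have h2 : HasDerivAt (fun l : ℝ => l • (Q₁ *ᵥ χ₁)) ((1 : ℝ) • (Q₁ *ᵥ χ₁)) lam :=
        (hasDerivAt_id lam).smul_const (Q₁ *ᵥ χ₁)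
      refine (h1.add h2).congr_deriv ?_
      rw [neg_one_smul, one_smul]; abel
    have hinv : HasDerivAt (fun l => (A l)⁻¹)
        (-((A lam)⁻¹ * (Q₁ - Q₀) * (A lam)⁻¹)) lam := by
      have hF := (hasFDerivAt_ringInverse (𝕜 := ℝ) hu.unit).comp_hasDerivAt_of_eq lam hAd
        hu.unit_spec.symm
      simp only [Function.comp_def, ← Matrix.nonsing_inv_eq_ringInverse] at hF
      refine hF.congr_deriv ?_
      simp [Matrix.coe_units_inv, hu.unit_spec]
    have hc : HasDerivAt (fun l => mulVecL ((A l)⁻¹))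
        (mulVecL (-((A lam)⁻¹ * (Q₁ - Q₀) * (A lam)⁻¹))) lam :=
      mulVecL.hasFDerivAt.comp_hasDerivAt lam hinv
    have hxd := hc.clm_apply hbd
    have hxeq : x = fun l => mulVecL ((A l)⁻¹) (b l) := by
      funext l
      simp [hx l, hA, hb]
    refine ⟨_, ?_, rfl⟩
    rw [hxeq]
    refine HasDerivAt.hasDerivWithinAt ?_
    convert hxd using 1
    simp only [mulVecL_apply, hA, hb]
    set M := ((1 - lam) • Q₀ + lam • Q₁)⁻¹ with hM
    set v := (1 - lam) • (Q₀ *ᵥ χ₀) + lam • (Q₁ *ᵥ χ₁) with hv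
    simp only [Matrix.neg_mulVec, Matrix.mulVec_sub, Matrix.sub_mulVec,
      Matrix.mulVec_mulVec, Matrix.sub_mul, Matrix.mul_sub, Matrix.mul_assoc]
    abel
  · rw [hx 0]
    simp [Matrix.mulVec_mulVec, Matrix.nonsing_inv_mul _ (isUnit_iff_ne_zero.mpr hQ₀.det_pos.ne')]
  · rw [hx 1]
    simp [Matrix.mulVec_mulVec, Matrix.nonsing_inv_mul _ (isUnit_iff_ne_zero.mpr hQ₁.det_pos.ne')]
end
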